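/- For n ≥ 1 and 0 ≤ k ≤ n−1, the number of partitions with perimeter n having exactly k repeated parts equals the number of (k+1)-extraordinary subsets of {1,...,n}. -/

import Mathlib

/-- A partition: a nonempty weakly decreasing list of positive integers. -/
def IsPartition (l : List ℕ) : Prop :=
  l ≠ [] ∧ l.Pairwise (· ≥ ·) ∧ ∀ x ∈ l, 0 < x

/-- The perimeter of a partition: largest part plus number of parts minus 1. -/
def perim (l : List ℕ) : ℕ := l.headI + l.length - 1

/-- Number of repeated parts: indices i with λ_i = λ_{i+1}. -/
def repStat (l : List ℕ) : ℕ :=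
  ((List.range (l.length - 1)).filter fun i => l.getD i 0 = l.getD (i + 1) 0).length

/-- Number of even parts. -/
def evenStat (l : List ℕ) : ℕ := l.countP fun x => x % 2 = 0


theorem aux_getD_rel {α : Type*} {R : α → α → Prop} {L : List α} (h : L.Pairwise R) {d : α} {i j : ℕ}
    (hij : i < j) (hj : j < L.length) : R (L.getD i d) (L.getD j d) := by
  rw [List.getD_eq_getElem L d (lt_trans hij hj), List.getD_eq_getElem L d hj]
  exact List.pairwise_iff_get.mp h ⟨i, lt_trans hij hj⟩ ⟨j, hj⟩ hij

theorem aux_getD_mem {α : Type*} {L : List α} {d : α} {i : ℕ} (hi : i < L.length) :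
    L.getD i d ∈ L := by
  rw [List.getD_eq_getElem L d hi]; exact List.getElem_mem _

theorem list_filter_length_eq (m : ℕ) (p : ℕ → Prop) [DecidablePred p] :
    ((List.range m).filter (fun i => decide (p i))).length = ((Finset.range m).filter p).card := by
  simp [Finset.filter, Finset.card, Finset.range, Multiset.range, Multiset.filter_coe]

theorem repStat_eq_card (l : List ℕ) :
    repStat l = ((Finset.range (l.length - 1)).filter fun i => l.getD i 0 = l.getD (i+1) 0).card := by
  rw [repStat, list_filter_length_eq]

-- basic partition facts
theorem part_anti {l : List ℕ} (hl : IsPartition l) {i j : ℕ} (hij : i ≤ j) (hj : j < l.length) :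
    l.getD j 0 ≤ l.getD i 0 := by
  rcases eq_or_lt_of_le hij with rfl | h
  · exact le_refl _
  · exact aux_getD_rel hl.2.1 h hj

theorem part_headI {l : List ℕ} (hl : l ≠ []) : l.headI = l.getD 0 0 := by
  cases l with
  | nil => simp at hl
  | cons a t => rfl

theorem part_pos {l : List ℕ} (hl : IsPartition l) {j : ℕ} (hj : j < l.length) :
    1 ≤ l.getD j 0 := hl.2.2 _ (aux_getD_mem hj)

theorem part_le_head {l : List ℕ} (hl : IsPartition l) {j : ℕ} (hj : j < l.length) :
    l.getD j 0 ≤ l.headI := by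
  rw [part_headI hl.1]; exact part_anti hl (Nat.zero_le j) hj

theorem part_len_pos {l : List ℕ} (hl : IsPartition l) : 0 < l.length :=
  List.length_pos_iff.mpr hl.1

-- the bijection
def phiE (l : List ℕ) : Finset ℕ :=
  ((Finset.range (l.length - 1)).filter fun i => l.getD i 0 = l.getD (i + 1) 0).image (· + 1)

def phiD (l : List ℕ) : Finset ℕ :=
  ((Finset.range (l.length - 1)).filter fun i => ¬ l.getD i 0 = l.getD (i + 1) 0).image
    (fun i => l.headI + l.length - l.getD (i + 1) 0)

def phi (l : List ℕ) : Finset ℕ := insert l.length (phiE l ∪ phiD l)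

-- strictness fact
theorem part_strict_lt {l : List ℕ} (hl : IsPartition l) {i i' : ℕ} (hii' : i < i')
    (hi' : i' + 1 < l.length) (hne : l.getD i' 0 ≠ l.getD (i' + 1) 0) :
    l.getD (i' + 1) 0 < l.getD (i + 1) 0 := by
  have h1 : l.getD (i' + 1) 0 ≤ l.getD i' 0 := part_anti hl (Nat.le_succ _) hi'
  have h2 : l.getD i' 0 ≤ l.getD (i + 1) 0 := part_anti hl (by omega) (by omega)
  omega

theorem phiE_mem {l : List ℕ} {x : ℕ} :
    x ∈ phiE l ↔ ∃ i, i < l.length - 1 ∧ l.getD i 0 = l.getD (i + 1) 0 ∧ x = i + 1 := by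
  simp only [phiE, Finset.mem_image, Finset.mem_filter, Finset.mem_range]
  constructor
  · rintro ⟨i, ⟨h1, h2⟩, rfl⟩; exact ⟨i, h1, h2, rfl⟩
  · rintro ⟨i, h1, h2, rfl⟩; exact ⟨i, ⟨h1, h2⟩, rfl⟩

theorem phiD_mem {l : List ℕ} {x : ℕ} :
    x ∈ phiD l ↔ ∃ i, i < l.length - 1 ∧ ¬ l.getD i 0 = l.getD (i + 1) 0 ∧
      x = l.headI + l.length - l.getD (i + 1) 0 := by
  simp only [phiD, Finset.mem_image, Finset.mem_filter, Finset.mem_range]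
  constructor
  · rintro ⟨i, ⟨h1, h2⟩, rfl⟩; exact ⟨i, h1, h2, rfl⟩
  · rintro ⟨i, h1, h2, rfl⟩; exact ⟨i, ⟨h1, h2⟩, rfl⟩

theorem phiE_range {l : List ℕ} {x : ℕ} (hx : x ∈ phiE l) : 1 ≤ x ∧ x ≤ l.length - 1 := by
  rcases phiE_mem.mp hx with ⟨i, h1, _, rfl⟩; omega

theorem phiD_range {l : List ℕ} (hl : IsPartition l) {x : ℕ} (hx : x ∈ phiD l) :
    l.length + 1 ≤ x ∧ x ≤ l.headI + l.length - 1 := by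
  rcases phiD_mem.mp hx with ⟨i, h1, h2, rfl⟩
  have hi1 : i + 1 < l.length := by omega
  have hpos : 1 ≤ l.getD (i+1) 0 := part_pos hl hi1
  have hlt : l.getD (i+1) 0 < l.getD i 0 :=
    lt_of_le_of_ne (part_anti hl (Nat.le_succ _) hi1) (Ne.symm h2)
  have hle : l.getD i 0 ≤ l.headI := part_le_head hl (by omega)
  omega

def repStat' (l : List ℕ) : ℕ :=
  ((Finset.range (l.length - 1)).filter fun i => l.getD i 0 = l.getD (i+1) 0).card

theorem phiE_card (l : List ℕ) : (phiE l).card = repStat' l := by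
  rw [phiE, repStat', Finset.card_image_of_injective _ (add_left_injective 1)]

theorem phiD_injOn {l : List ℕ} (hl : IsPartition l) :
    Set.InjOn (fun i => l.headI + l.length - l.getD (i + 1) 0)
      ((Finset.range (l.length - 1)).filter fun i => ¬ l.getD i 0 = l.getD (i + 1) 0) := by
  intro i hi i' hi' heq
  simp only [Finset.coe_filter, Set.mem_setOf_eq, Finset.mem_range] at hi hi'
  by_contra hne
  rcases Nat.lt_or_ge i i' with h | h
  · have := part_strict_lt hl h (by omega) hi'.2
    have b1 : l.getD (i+1) 0 ≤ l.headI := part_le_head hl (by omega)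
    simp only at heq; omega
  · have hii : i' < i := by omega
    have := part_strict_lt hl hii (by omega) hi.2
    have b1 : l.getD (i'+1) 0 ≤ l.headI := part_le_head hl (by omega)
    simp only at heq; omega

theorem phiD_card {l : List ℕ} (hl : IsPartition l) :
    (phiD l).card = (l.length - 1) - repStat' l := by
  rw [phiD, Finset.card_image_of_injOn (phiD_injOn hl)]
  have := Finset.card_filter_add_card_filter_not (s := Finset.range (l.length - 1))
    (p := fun i => l.getD i 0 = l.getD (i+1) 0)
  rw [Finset.card_range] at this
  rw [repStat']
  omega

theorem phi_card {l : List ℕ} (hl : IsPartition l) : (phi l).card = l.length := by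
  have hd : Disjoint (phiE l) (phiD l) := by
    rw [Finset.disjoint_left]
    intro x hxE hxD
    have := phiE_range hxE
    have := phiD_range hl hxD
    omega
  have hnotin : l.length ∉ phiE l ∪ phiD l := by
    intro hx
    rcases Finset.mem_union.mp hx with h | h
    · have := phiE_range h; have := part_len_pos hl; omega
    · have := phiD_range hl h; omega
  rw [phi, Finset.card_insert_of_notMem hnotin, Finset.card_union_of_disjoint hd,
    phiE_card, phiD_card hl]
  have hr : repStat' l ≤ l.length - 1 := by
    rw [repStat']
    calc _ ≤ (Finset.range (l.length-1)).card := Finset.card_filter_le _ _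
    _ = _ := Finset.card_range _
  have := part_len_pos hl
  omega

theorem phi_filter_lt {l : List ℕ} (hl : IsPartition l) :
    (phi l).filter (fun x => x < l.length) = phiE l := by
  ext x
  simp only [Finset.mem_filter, phi, Finset.mem_insert, Finset.mem_union]
  constructor
  · rintro ⟨h1 | h1 | h1, h2⟩
    · omega
    · exact h1
    · have := phiD_range hl h1; omega
  · intro hx
    have := phiE_range hx
    have := part_len_pos hl
    exact ⟨Or.inr (Or.inl hx), by omega⟩

theorem phi_filter_ge {l : List ℕ} (hl : IsPartition l) :
    (phi l).filter (fun x => l.length ≤ x) = insert l.length (phiD l) := by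
  ext x
  simp only [Finset.mem_filter, phi, Finset.mem_insert, Finset.mem_union]
  constructor
  · rintro ⟨h1 | h1 | h1, h2⟩
    · exact Or.inl h1
    · have := phiE_range h1; omega
    · exact Or.inr h1
  · rintro (rfl | hx)
    · exact ⟨Or.inl rfl, le_refl _⟩
    · have := phiD_range hl hx
      exact ⟨Or.inr (Or.inr hx), by omega⟩

theorem countP_sort (s : Finset ℕ) (p : ℕ → Prop) [DecidablePred p] :
    (s.sort (· ≤ ·)).countP (fun y => decide (p y)) = (s.filter p).card := by
  rw [(Finset.sort_perm_toList s _).countP_eq]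
  rcases s with ⟨⟨L⟩, h⟩
  have hperm : ((↑L : Multiset ℕ)).toList.Perm L := by
    rw [← Multiset.coe_eq_coe, Multiset.coe_toList]
  simp [Finset.toList, Finset.filter, Finset.card, Multiset.filter_coe,
    List.countP_eq_length_filter]
  exact (hperm.filter _).length_eq

theorem aux_getD_countP_lt {L : List ℕ} (h : L.Pairwise (· < ·)) {x : ℕ} (hx : x ∈ L) :
    L.getD (L.countP (fun y => decide (y < x))) 0 = x := by
  induction L with
  | nil => simp at hx
  | cons a t ih =>
    have hat : ∀ y ∈ t, a < y := fun y hy => (List.pairwise_cons.mp h).1 y hy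
    rcases List.mem_cons.mp hx with rfl | hxt
    · have : t.countP (fun y => decide (y < x)) = 0 := by
        rw [List.countP_eq_zero]
        intro y hy; simpa using not_lt.mpr (le_of_lt (hat y hy))
      simp [List.countP_cons, this]
    · have hax : a < x := hat x hxt
      have : (a :: t).countP (fun y => decide (y < x)) = t.countP (fun y => decide (y < x)) + 1 := by
        simp [List.countP_cons, hax]
      rw [this]
      simpa using ih (List.pairwise_cons.mp h).2 hxt

theorem aux_countP_getD {L : List ℕ} (h : L.Pairwise (· < ·)) {k : ℕ} (hk : k < L.length) :
    L.countP (fun y => decide (y < L.getD k 0)) = k := by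
  induction L generalizing k with
  | nil => simp at hk
  | cons a t ih =>
    have hat : ∀ y ∈ t, a < y := fun y hy => (List.pairwise_cons.mp h).1 y hy
    cases k with
    | zero =>
      rw [List.countP_eq_zero]
      intro y hy
      rcases List.mem_cons.mp hy with rfl | hyt
      · simp
      · simpa using not_lt.mpr (le_of_lt (hat y hyt))
    | succ k =>
      have hk' : k < t.length := by simpa using hk
      have hmem : t.getD k 0 ∈ t := aux_getD_mem hk'
      have : (a :: t).getD (k+1) 0 = t.getD k 0 := rfl
      rw [this, List.countP_cons]
      have hax : a < t.getD k 0 := hat _ hmem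
      rw [ih (List.pairwise_cons.mp h).2 hk']
      simp [List.getD] at hax ⊢; simp [hax]

theorem sort_getD_eq {S : Finset ℕ} {x c : ℕ} (hx : x ∈ S) (hc : (S.filter (fun y => y < x)).card = c) :
    (S.sort (· ≤ ·)).getD c 0 = x := by
  subst hc
  have := aux_getD_countP_lt ((Finset.sortedLT_sort S).pairwise) ((Finset.mem_sort _).mpr hx)
  rwa [countP_sort] at this

theorem sort_getD_inv {S : Finset ℕ} {c : ℕ} (hc : c < S.card) :
    (S.sort (· ≤ ·)).getD c 0 ∈ S ∧ (S.filter (fun y => y < (S.sort (· ≤ ·)).getD c 0)).card = c := by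
  have hlen : c < (S.sort (· ≤ ·)).length := by rwa [Finset.length_sort]
  refine ⟨(Finset.mem_sort _).mp (aux_getD_mem hlen), ?_⟩
  rw [← countP_sort]
  exact aux_countP_getD ((Finset.sortedLT_sort S).pairwise) hlen

theorem crux {l : List ℕ} (hl : IsPartition l) :
    ∀ j, j < l.length →
    (((phi l).filter fun x => l.length ≤ x).sort (· ≤ ·)).getD
      (((Finset.range j).filter fun i => ¬ l.getD i 0 = l.getD (i + 1) 0).card) 0
    = l.headI + l.length - l.getD j 0 := by
  intro j
  induction j with
  | zero =>
    intro hj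
    have h0 : l.getD 0 0 = l.headI := (part_headI hl.1).symm
    have hm : 1 ≤ l.headI := by rw [← h0]; exact part_pos hl hj
    have hx : l.headI + l.length - l.getD 0 0 = l.length := by omega
    rw [hx]
    simp only [Finset.range_zero, Finset.filter_empty, Finset.card_empty]
    apply sort_getD_eq
    · rw [phi_filter_ge hl]; exact Finset.mem_insert_self _ _
    · rw [Finset.card_eq_zero, Finset.filter_eq_empty_iff]
      intro x hx
      simp only [Finset.mem_filter] at hx
      omega
  | succ j ih =>
    intro hj
    have hjl : j < l.length := by omega
    have hcs : ((Finset.range (j+1)).filter fun i => ¬ l.getD i 0 = l.getD (i + 1) 0).card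
        = ((Finset.range j).filter fun i => ¬ l.getD i 0 = l.getD (i + 1) 0).card
          + (if ¬ l.getD j 0 = l.getD (j + 1) 0 then 1 else 0) := by
      rw [Finset.range_add_one, Finset.filter_insert]
      split
      · rw [Finset.card_insert_of_notMem (by simp)]
      · rfl
    by_cases heq : l.getD j 0 = l.getD (j + 1) 0
    · rw [hcs]
      simp only [heq, not_true_eq_false, if_false, add_zero]
      rw [← heq]
      exact ih hjl
    · rw [hcs]
      rw [if_pos heq]
      set x := l.headI + l.length - l.getD (j + 1) 0 with hxdef
      have hjr : j < l.length - 1 := by omega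
      have hxD : x ∈ phiD l := phiD_mem.mpr ⟨j, hjr, heq, rfl⟩
      have hxrange := phiD_range hl hxD
      apply sort_getD_eq
      · rw [phi_filter_ge hl]
        exact Finset.mem_insert_of_mem hxD
      · -- card computation
        rw [phi_filter_ge hl, Finset.filter_insert]
        have hlx : l.length < x := by omega
        rw [if_pos hlx]
        have hnotmem : l.length ∉ (phiD l).filter (fun y => y < x) := by
          intro h
          have := phiD_range hl (Finset.mem_filter.mp h).1
          omega
        rw [Finset.card_insert_of_notMem hnotmem]
        -- (phiD l).filter (< x) card = cs j
        rw [phiD, Finset.filter_image]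
        have hset :
            ((Finset.range (l.length - 1)).filter fun i => ¬ l.getD i 0 = l.getD (i + 1) 0).filter
              (fun i => l.headI + l.length - l.getD (i + 1) 0 < x)
            = (Finset.range j).filter fun i => ¬ l.getD i 0 = l.getD (i + 1) 0 := by
          ext i
          simp only [Finset.mem_filter, Finset.mem_range]
          constructor
          · rintro ⟨⟨hi1, hi2⟩, hi3⟩
            refine ⟨?_, hi2⟩
            by_contra hc
            have hji : j + 1 ≤ i + 1 := by omega
            have : l.getD (i+1) 0 ≤ l.getD (j+1) 0 := part_anti hl hji (by omega)
            have hb : l.getD (i+1) 0 ≤ l.headI := part_le_head hl (by omega)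
            omega
          · rintro ⟨hi1, hi2⟩
            have hi1' : i < l.length - 1 := by omega
            refine ⟨⟨hi1', hi2⟩, ?_⟩
            have hlt : l.getD (j+1) 0 < l.getD (i+1) 0 := part_strict_lt hl hi1 hj heq
            have hb : l.getD (i+1) 0 ≤ l.headI := part_le_head hl (by omega)
            omega
        rw [hset]
        have hinj : Set.InjOn (fun i => l.headI + l.length - l.getD (i + 1) 0)
            ((Finset.range j).filter fun i => ¬ l.getD i 0 = l.getD (i + 1) 0) := by
          apply (phiD_injOn hl).mono
          intro i hi
          simp only [Finset.coe_filter, Set.mem_setOf_eq, Finset.mem_range] at hi ⊢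
          exact ⟨by omega, hi.2⟩
        rw [Finset.card_image_of_injOn hinj]

def psi (n : ℕ) (S : Finset ℕ) : List ℕ :=
  (List.range S.card).map fun j =>
    n + 1 - ((S.filter fun x => S.card ≤ x).sort (· ≤ ·)).getD
      (j - (S.filter fun x => x ≤ j).card) 0

theorem psi_length (n : ℕ) (S : Finset ℕ) : (psi n S).length = S.card := by simp [psi]

theorem psi_entry (n : ℕ) (S : Finset ℕ) {j : ℕ} (hj : j < S.card) :
    (psi n S).getD j 0 = n + 1 - ((S.filter fun x => S.card ≤ x).sort (· ≤ ·)).getD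
      (j - (S.filter fun x => x ≤ j).card) 0 := by
  rw [List.getD_eq_getElem _ _ (by simpa [psi] using hj)]
  simp [psi]

theorem phi_filter_le_card {l : List ℕ} (hl : IsPartition l) {j : ℕ} (hj : j < l.length) :
    ((phi l).filter fun x => x ≤ j).card
      = ((Finset.range j).filter fun i => l.getD i 0 = l.getD (i + 1) 0).card := by
  have h1 : (phi l).filter (fun x => x ≤ j) = (phiE l).filter (fun x => x ≤ j) := by
    ext x
    simp only [Finset.mem_filter, phi, Finset.mem_insert, Finset.mem_union]
    constructor
    · rintro ⟨h | h | h, h2⟩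
      · omega
      · exact ⟨h, h2⟩
      · have := phiD_range hl h; omega
    · rintro ⟨h, h2⟩; exact ⟨Or.inr (Or.inl h), h2⟩
  rw [h1, phiE, Finset.filter_image]
  have h2 : ((Finset.range (l.length - 1)).filter fun i => l.getD i 0 = l.getD (i+1) 0).filter
      (fun i => i + 1 ≤ j) = (Finset.range j).filter fun i => l.getD i 0 = l.getD (i + 1) 0 := by
    ext i
    simp only [Finset.mem_filter, Finset.mem_range]
    constructor
    · rintro ⟨⟨h3, h4⟩, h5⟩; exact ⟨by omega, h4⟩
    · rintro ⟨h3, h4⟩; exact ⟨⟨by omega, h4⟩, by omega⟩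
  rw [h2, Finset.card_image_of_injective _ (add_left_injective 1)]

theorem psi_phi {l : List ℕ} (hl : IsPartition l) {n : ℕ} (hn : l.headI + l.length = n + 1) :
    psi n (phi l) = l := by
  have hlen : (psi n (phi l)).length = l.length := by rw [psi_length, phi_card hl]
  apply List.ext_getElem hlen
  intro j h1 h2
  rw [← List.getD_eq_getElem (psi n (phi l)) 0 h1, ← List.getD_eq_getElem l 0 h2]
  rw [psi_entry n (phi l) (by rw [phi_card hl]; exact h2)]
  rw [phi_card hl]
  rw [phi_filter_le_card hl h2]
  have hsum :
      ((Finset.range j).filter fun i => l.getD i 0 = l.getD (i + 1) 0).card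
      + ((Finset.range j).filter fun i => ¬ l.getD i 0 = l.getD (i + 1) 0).card = j := by
    have := Finset.card_filter_add_card_filter_not (s := Finset.range j)
      (p := fun i => l.getD i 0 = l.getD (i+1) 0)
    rwa [Finset.card_range] at this
  have hidx : j - ((Finset.range j).filter fun i => l.getD i 0 = l.getD (i + 1) 0).card
      = ((Finset.range j).filter fun i => ¬ l.getD i 0 = l.getD (i + 1) 0).card := by omega
  rw [hidx, crux hl j h2]
  have hb1 : l.getD j 0 ≤ l.headI := part_le_head hl h2
  have hb2 : 1 ≤ l.getD j 0 := part_pos hl h2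
  omega

theorem repStat'_le {l : List ℕ} : repStat' l ≤ l.length - 1 := by
  rw [repStat']
  calc _ ≤ (Finset.range (l.length - 1)).card := Finset.card_filter_le _ _
  _ = _ := Finset.card_range _

theorem phi_mem {l : List ℕ} (hl : IsPartition l) {n : ℕ} (hn : l.headI + l.length = n + 1) :
    phi l ⊆ Finset.Icc 1 n ∧ repStat' l + 1 ≤ (phi l).card ∧
    (phi l).card = ((phi l).sort (· ≤ ·)).getD (repStat' l) 0 := by
  have hlpos := part_len_pos hl
  have hmpos : 1 ≤ l.headI := by
    rw [part_headI hl.1]; exact part_pos hl hlpos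
  refine ⟨?_, ?_, ?_⟩
  · intro x hx
    rw [Finset.mem_Icc]
    rcases Finset.mem_insert.mp hx with rfl | hx'
    · omega
    · rcases Finset.mem_union.mp hx' with h | h
      · have := phiE_range h; omega
      · have := phiD_range hl h; omega
  · rw [phi_card hl]; have := repStat'_le (l := l); omega
  · rw [phi_card hl]
    symm
    apply sort_getD_eq (S := phi l) (x := l.length) (Finset.mem_insert_self _ _)
    rw [phi_filter_lt hl, phiE_card]

section PsiSide

variable {n k : ℕ} {S : Finset ℕ}

theorem filter_le_card_le (hS1 : S ⊆ Finset.Icc 1 n) (j : ℕ) :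
    (S.filter fun x => x ≤ j).card ≤ j := by
  have hsub : (S.filter fun x => x ≤ j) ⊆ Finset.Icc 1 j := by
    intro x hx
    rcases Finset.mem_filter.mp hx with ⟨hxS, hxj⟩
    have := Finset.mem_Icc.mp (hS1 hxS)
    exact Finset.mem_Icc.mpr ⟨this.1, hxj⟩
  calc (S.filter fun x => x ≤ j).card ≤ (Finset.Icc 1 j).card := Finset.card_le_card hsub
  _ = j := by rw [Nat.card_Icc]; omega

theorem cstep (hS1 : S ⊆ Finset.Icc 1 n) (j : ℕ) :
    (j + 1) - (S.filter fun x => x ≤ j + 1).card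
      = if j + 1 ∈ S then j - (S.filter fun x => x ≤ j).card
        else j - (S.filter fun x => x ≤ j).card + 1 := by
  have hcle := filter_le_card_le hS1 j
  by_cases hmem : j + 1 ∈ S
  · have hfe : S.filter (fun x => x ≤ j + 1) = insert (j+1) (S.filter fun x => x ≤ j) := by
      ext x
      simp only [Finset.mem_filter, Finset.mem_insert]
      constructor
      · rintro ⟨hxS, hxj⟩
        rcases Nat.lt_or_ge x (j+1) with h | h
        · exact Or.inr ⟨hxS, by omega⟩
        · exact Or.inl (by omega)
      · rintro (rfl | ⟨hxS, hxj⟩)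
        · exact ⟨hmem, le_refl _⟩
        · exact ⟨hxS, by omega⟩
    rw [if_pos hmem, hfe, Finset.card_insert_of_notMem (by
      intro h; have := (Finset.mem_filter.mp h).2; omega)]
    omega
  · have hfe : S.filter (fun x => x ≤ j + 1) = S.filter fun x => x ≤ j := by
      ext x
      simp only [Finset.mem_filter]
      constructor
      · rintro ⟨hxS, hxj⟩
        refine ⟨hxS, ?_⟩
        rcases Nat.lt_or_ge x (j+1) with h | h
        · omega
        · have : x = j + 1 := by omega
          subst this; exact absurd hxS hmem
      · rintro ⟨hxS, hxj⟩; exact ⟨hxS, by omega⟩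
    rw [if_neg hmem, hfe]
    omega

theorem cmono (hS1 : S ⊆ Finset.Icc 1 n) {i j : ℕ} (hij : i ≤ j) :
    i - (S.filter fun x => x ≤ i).card ≤ j - (S.filter fun x => x ≤ j).card := by
  induction j with
  | zero => omega
  | succ j ih =>
    rcases Nat.lt_or_ge i (j+1) with h | h
    · have h1 := ih (by omega)
      have h2 := cstep hS1 (n := n) j
      split at h2 <;> omega
    · have : i = j + 1 := by omega
      subst this; exact le_refl _

end PsiSide

theorem repStat_eq' (l : List ℕ) : repStat l = repStat' l := by
  rw [repStat_eq_card, repStat']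

theorem psi_good {n k : ℕ} {S : Finset ℕ} (hS1 : S ⊆ Finset.Icc 1 n)
    (hS2 : k + 1 ≤ S.card) (hS3 : S.card = (S.sort (· ≤ ·)).getD k 0) :
    IsPartition (psi n S) ∧ perim (psi n S) = n ∧ repStat (psi n S) = k ∧ phi (psi n S) = S := by
  have hk : k < S.card := by omega
  have hinv := sort_getD_inv (S := S) hk
  rw [← hS3] at hinv
  have hmemS : S.card ∈ S := hinv.1
  have hBcard : (S.filter fun y => y < S.card).card = k := hinv.2
  have hcard_pos : 1 ≤ S.card := by omega
  have hcardn : S.card ≤ n := by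
    have := Finset.card_le_card hS1
    rw [Nat.card_Icc] at this
    omega
  have hmemIcc : ∀ x ∈ S, 1 ≤ x ∧ x ≤ n := fun x hx => Finset.mem_Icc.mp (hS1 hx)
  have hAcard : (S.filter fun x => S.card ≤ x).card = S.card - k := by
    have hsplit := Finset.card_filter_add_card_filter_not (s := S)
      (p := fun y => y < S.card)
    have heq : S.filter (fun y => ¬ y < S.card) = S.filter fun x => S.card ≤ x := by
      apply Finset.filter_congr
      intro x _
      constructor
      · intro h; simpa using h
      · intro h; simpa using h
    rw [heq] at hsplit
    omega
  have hA'len : ((S.filter fun x => S.card ≤ x).sort (· ≤ ·)).length = S.card - k := by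
    rw [Finset.length_sort, hAcard]
  have hA'memS : ∀ i, i < S.card - k →
      ((S.filter fun x => S.card ≤ x).sort (· ≤ ·)).getD i 0 ∈ S ∧
      S.card ≤ ((S.filter fun x => S.card ≤ x).sort (· ≤ ·)).getD i 0 ∧
      ((S.filter fun x => S.card ≤ x).sort (· ≤ ·)).getD i 0 ≤ n := by
    intro i hi
    have hmem : ((S.filter fun x => S.card ≤ x).sort (· ≤ ·)).getD i 0
        ∈ (S.filter fun x => S.card ≤ x).sort (· ≤ ·) := aux_getD_mem (by rw [hA'len]; exact hi)
    have h2 := Finset.mem_filter.mp ((Finset.mem_sort _).mp hmem)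
    exact ⟨h2.1, h2.2, (hmemIcc _ h2.1).2⟩
  have hA'0 : ((S.filter fun x => S.card ≤ x).sort (· ≤ ·)).getD 0 0 = S.card := by
    apply sort_getD_eq (Finset.mem_filter.mpr ⟨hmemS, le_refl _⟩)
    rw [Finset.card_eq_zero, Finset.filter_eq_empty_iff]
    intro x hx
    have := (Finset.mem_filter.mp hx).2
    omega
  have hctop : (S.card - 1) - (S.filter fun x => x ≤ S.card - 1).card = S.card - 1 - k := by
    have heq : S.filter (fun x => x ≤ S.card - 1) = S.filter fun y => y < S.card := by
      apply Finset.filter_congr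
      intro x _
      constructor <;> (intro h; omega)
    rw [heq, hBcard]
  have hcbound : ∀ j, j ≤ S.card - 1 →
      j - (S.filter fun x => x ≤ j).card ≤ S.card - 1 - k := by
    intro j hj
    have := cmono (n := n) hS1 hj
    omega
  have hcbound' : ∀ j, j ≤ S.card - 1 →
      j - (S.filter fun x => x ≤ j).card <
        ((S.filter fun x => S.card ≤ x).sort (· ≤ ·)).length := by
    intro j hj
    have := hcbound j hj
    rw [hA'len]
    omega
  have hent : ∀ j, j < S.card → (psi n S).getD j 0 =
      n + 1 - ((S.filter fun x => S.card ≤ x).sort (· ≤ ·)).getD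
        (j - (S.filter fun x => x ≤ j).card) 0 := fun j hj => psi_entry n S hj
  have hpsi_ne : psi n S ≠ [] := by
    have : (psi n S).length = S.card := psi_length n S
    intro h
    rw [h] at this
    simp at this
    omega
  have hc0 : (0 : ℕ) - (S.filter fun x => x ≤ 0).card = 0 := by omega
  have hpsi_headI : (psi n S).headI = n + 1 - S.card := by
    rw [part_headI hpsi_ne, hent 0 (by omega), hc0, hA'0]
  -- sortedness
  have hgmono : ∀ i j, i ≤ j → j ≤ S.card - 1 →
      ((S.filter fun x => S.card ≤ x).sort (· ≤ ·)).getD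
        (i - (S.filter fun x => x ≤ i).card) 0
      ≤ ((S.filter fun x => S.card ≤ x).sort (· ≤ ·)).getD
        (j - (S.filter fun x => x ≤ j).card) 0 := by
    intro i j hij hj
    have hcij := cmono (n := n) hS1 hij
    rcases eq_or_lt_of_le hcij with heq | hlt
    · rw [heq]
    · exact aux_getD_rel (Finset.pairwise_sort _ _) hlt (hcbound' j hj)
  have hsorted : (psi n S).Pairwise (· ≥ ·) := by
    rw [List.pairwise_iff_get]
    intro i j hij
    have hjlen : (j : ℕ) < S.card := by
      rw [← psi_length n S]; exact j.isLt
    have hilen : (i : ℕ) < S.card := lt_trans hij hjlen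
    rw [List.get_eq_getElem, List.get_eq_getElem,
      ← List.getD_eq_getElem (psi n S) 0, ← List.getD_eq_getElem (psi n S) 0,
      hent i hilen, hent j hjlen]
    exact Nat.sub_le_sub_left (hgmono i j (le_of_lt hij) (by omega)) (n+1)
  have hpos : ∀ x ∈ psi n S, 0 < x := by
    intro x hx
    rw [psi, List.mem_map] at hx
    rcases hx with ⟨j, hj, rfl⟩
    rw [List.mem_range] at hj
    have hb := hA'memS _ (by rw [← hA'len]; exact hcbound' j (by omega))
    omega
  have hIsPart : IsPartition (psi n S) := ⟨hpsi_ne, hsorted, hpos⟩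
  have hperim : perim (psi n S) = n := by
    rw [perim, hpsi_headI, psi_length]
    omega
  -- repStat
  have hiff : ∀ i, i < S.card - 1 →
      ((psi n S).getD i 0 = (psi n S).getD (i + 1) 0 ↔ i + 1 ∈ S) := by
    intro i hi
    rw [hent i (by omega), hent (i+1) (by omega)]
    have hstep := cstep (n := n) hS1 i
    by_cases hmem : i + 1 ∈ S
    · rw [if_pos hmem] at hstep
      rw [hstep]
      simp [hmem]
    · rw [if_neg hmem] at hstep
      rw [hstep]
      have hbnd : (i - (S.filter fun x => x ≤ i).card) + 1 <
          ((S.filter fun x => S.card ≤ x).sort (· ≤ ·)).length := by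
        have := hcbound' (i+1) (by omega)
        rw [← hstep]
        omega
      have hlt : ((S.filter fun x => S.card ≤ x).sort (· ≤ ·)).getD
            (i - (S.filter fun x => x ≤ i).card) 0
          < ((S.filter fun x => S.card ≤ x).sort (· ≤ ·)).getD
            ((i - (S.filter fun x => x ≤ i).card) + 1) 0 :=
        aux_getD_rel ((Finset.sortedLT_sort _).pairwise) (lt_add_one _) hbnd
      have hub : ((S.filter fun x => S.card ≤ x).sort (· ≤ ·)).getD
          ((i - (S.filter fun x => x ≤ i).card) + 1) 0 ≤ n := by
        have := hA'memS _ (by rw [← hA'len]; exact hbnd)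
        exact this.2.2
      simp only [hmem, iff_false]
      omega
  have himg : ((Finset.range (S.card - 1)).filter fun i => i + 1 ∈ S).image (· + 1)
      = S.filter fun y => y < S.card := by
    ext x
    simp only [Finset.mem_image, Finset.mem_filter, Finset.mem_range]
    constructor
    · rintro ⟨i, ⟨hi, hiS⟩, rfl⟩
      exact ⟨hiS, by omega⟩
    · rintro ⟨hxS, hx⟩
      have hx1 : 1 ≤ x := (hmemIcc x hxS).1
      exact ⟨x - 1, ⟨by omega, by rw [Nat.sub_add_cancel hx1]; exact hxS⟩,
        by rw [Nat.sub_add_cancel hx1]⟩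
  have hfe : (Finset.range ((psi n S).length - 1)).filter
        (fun i => (psi n S).getD i 0 = (psi n S).getD (i + 1) 0)
      = (Finset.range (S.card - 1)).filter fun i => i + 1 ∈ S := by
    rw [psi_length]
    apply Finset.filter_congr
    intro i hi
    rw [Finset.mem_range] at hi
    exact hiff i hi
  have hrep' : repStat' (psi n S) = k := by
    rw [repStat', hfe, ← hBcard, ← himg,
      Finset.card_image_of_injective _ (add_left_injective 1)]
  have hrep : repStat (psi n S) = k := by rw [repStat_eq', hrep']
  -- phi ∘ psi = id
  have hphiE : phiE (psi n S) = S.filter fun y => y < S.card := by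
    rw [phiE, hfe, himg]
  have hsum : (psi n S).headI + (psi n S).length = n + 1 := by
    rw [hpsi_headI, psi_length]
    omega
  have hphiD : phiD (psi n S) = S.filter fun y => S.card < y := by
    have hAgt : (S.filter fun y => S.card < y).card = S.card - 1 - k := by
      have hins : S.filter (fun x => S.card ≤ x) = insert S.card (S.filter fun y => S.card < y) := by
        ext x
        simp only [Finset.mem_filter, Finset.mem_insert]
        constructor
        · rintro ⟨hxS, hle⟩
          rcases eq_or_lt_of_le hle with h | h
          · exact Or.inl h.symm
          · exact Or.inr ⟨hxS, h⟩
        · rintro (rfl | ⟨hxS, hlt⟩)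
          · exact ⟨hmemS, le_refl _⟩
          · exact ⟨hxS, le_of_lt hlt⟩
      have hnotmem : S.card ∉ S.filter fun y => S.card < y := by
        intro h
        have := (Finset.mem_filter.mp h).2
        omega
      rw [hins, Finset.card_insert_of_notMem hnotmem] at hAcard
      omega
    apply Finset.eq_of_subset_of_card_le
    · intro x hx
      rcases phiD_mem.mp hx with ⟨i, hi, hne, rfl⟩
      rw [psi_length] at hi
      have hc1 : i + 1 ∉ S := by
        intro hmem
        exact hne ((hiff i hi).mpr hmem)
      have hstep := cstep (n := n) hS1 i
      rw [if_neg hc1] at hstep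
      have hbnd : (i + 1) - (S.filter fun x => x ≤ i + 1).card <
          ((S.filter fun x => S.card ≤ x).sort (· ≤ ·)).length := hcbound' (i+1) (by omega)
      have hgmem := hA'memS _ (by rw [← hA'len]; exact hbnd)
      have hglt : S.card < ((S.filter fun x => S.card ≤ x).sort (· ≤ ·)).getD
          ((i + 1) - (S.filter fun x => x ≤ i + 1).card) 0 := by
        have h0lt := aux_getD_rel (R := (· < ·)) (d := 0) (i := 0)
          (Finset.sortedLT_sort (S.filter fun x => S.card ≤ x)).pairwise
          (show 0 < (i + 1) - (S.filter fun x => x ≤ i + 1).card by omega) hbnd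
        rwa [hA'0] at h0lt
      have hentval := hent (i+1) (by omega)
      have hx_eq : (psi n S).headI + (psi n S).length - (psi n S).getD (i + 1) 0
          = ((S.filter fun x => S.card ≤ x).sort (· ≤ ·)).getD
            ((i + 1) - (S.filter fun x => x ≤ i + 1).card) 0 := by
        rw [hsum, hentval]
        omega
      rw [hx_eq]
      exact Finset.mem_filter.mpr ⟨hgmem.1, hglt⟩
    · rw [hAgt, phiD_card hIsPart, psi_length, hrep']
  have hphi : phi (psi n S) = S := by
    rw [phi, psi_length, hphiE, hphiD]
    ext x
    simp only [Finset.mem_insert, Finset.mem_union, Finset.mem_filter]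
    constructor
    · rintro (rfl | ⟨hxS, _⟩ | ⟨hxS, _⟩) <;> first | exact hmemS | exact hxS
    · intro hxS
      rcases lt_trichotomy x S.card with h | h | h
      · exact Or.inr (Or.inl ⟨hxS, h⟩)
      · exact Or.inl h
      · exact Or.inr (Or.inr ⟨hxS, h⟩)
  exact ⟨hIsPart, hperim, hrep, hphi⟩

theorem part_sum {l : List ℕ} (hl : IsPartition l) {n : ℕ} (hp : perim l = n) :
    l.headI + l.length = n + 1 := by
  have h1 := part_len_pos hl
  have h2 : 1 ≤ l.headI := by
    rw [part_headI hl.1]; exact part_pos hl h1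
  rw [perim] at hp
  omega

theorem rep_eq_extraordinary (n k : ℕ) (hn : 1 ≤ n) (hk : k ≤ n - 1) :
    {l : List ℕ | IsPartition l ∧ perim l = n ∧ repStat l = k}.ncard =
    {S : Finset ℕ | S ⊆ Finset.Icc 1 n ∧ k + 1 ≤ S.card ∧
      S.card = (S.sort (· ≤ ·)).getD k 0}.ncard := by
  have himg : phi '' {l : List ℕ | IsPartition l ∧ perim l = n ∧ repStat l = k}
      = {S : Finset ℕ | S ⊆ Finset.Icc 1 n ∧ k + 1 ≤ S.card ∧
        S.card = (S.sort (· ≤ ·)).getD k 0} := by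
    ext S
    constructor
    · rintro ⟨l, ⟨hp, hperim, hrep⟩, rfl⟩
      have hn1 : l.headI + l.length = n + 1 := part_sum hp hperim
      obtain ⟨h1, h2, h3⟩ := phi_mem hp hn1
      rw [repStat_eq'] at hrep
      rw [hrep] at h2 h3
      exact ⟨h1, h2, h3⟩
    · rintro ⟨h1, h2, h3⟩
      obtain ⟨hp, hperim, hrep, hphi⟩ := psi_good h1 h2 h3
      exact ⟨psi n S, ⟨hp, hperim, hrep⟩, hphi⟩
  have hinj : Set.InjOn phi {l : List ℕ | IsPartition l ∧ perim l = n ∧ repStat l = k} := by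
    rintro l1 ⟨hp1, hperim1, _⟩ l2 ⟨hp2, hperim2, _⟩ heq
    have e1 := psi_phi hp1 (part_sum hp1 hperim1)
    have e2 := psi_phi hp2 (part_sum hp2 hperim2)
    rw [← e1, ← e2, heq]
  calc {l : List ℕ | IsPartition l ∧ perim l = n ∧ repStat l = k}.ncard
      = (phi '' {l : List ℕ | IsPartition l ∧ perim l = n ∧ repStat l = k}).ncard :=
        (Set.ncard_image_of_injOn hinj).symm
  _ = _ := by rw [himg]
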